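/- Suppose T has measurable images (the set-theoretic image T(A) is measurable for every measurable A ⊆ X) and has no ambitious null-sets (λ(A) = 0 implies λ'(T(A)) = 0 for every measurable A ⊆ X). Then for every measurable A ⊆ X the essential image coincides with the set-theoretic image up to λ'-null sets: T̂A =̇ T(A). -/

import Mathlib

open MeasureTheory Set

/-- If `T` has measurable images and no ambitious null-sets, then the
essential image coincides with the set-theoretic image up to `λ'`-null sets:
`T̂A =̇ T(A)` for every measurable `A`. -/
theorem stmt_7 {X X' : Type*} [MeasurableSpace X] [MeasurableSpace X']
    (lam : Measure X) (lam' : Measure X') [SigmaFinite lam] [SigmaFinite lam']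
    (T : X → X') (hT : Measurable T) (hnp : lam.map T ≪ lam')
    (hatT : Set X → Set X')
    (hm : ∀ A : Set X, MeasurableSet A → MeasurableSet (hatT A))
    (hchar : ∀ A : Set X, MeasurableSet A → ∀ C' : Set X', MeasurableSet C' →
      (0 < lam' (hatT A ∩ C') ↔ 0 < lam (A ∩ T ⁻¹' C')))
    (hmi : ∀ A : Set X, MeasurableSet A → MeasurableSet (T '' A))
    (hna : ∀ A : Set X, MeasurableSet A → lam A = 0 → lam' (T '' A) = 0) :
    ∀ A : Set X, MeasurableSet A → lam' (symmDiff (hatT A) (T '' A)) = 0 := by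
  intro A hA
  have h1 : lam' (hatT A \ T '' A) = 0 := by
    by_contra h
    have hpos : 0 < lam' (hatT A ∩ (T '' A)ᶜ) := by
      rw [← Set.diff_eq]
      exact pos_iff_ne_zero.mpr h
    have := (hchar A hA _ (hmi A hA).compl).mp hpos
    have hz : A ∩ T ⁻¹' (T '' A)ᶜ = ∅ := by
      ext x
      simp only [mem_inter_iff, mem_preimage, mem_compl_iff, mem_empty_iff_false,
        iff_false, not_and]
      exact fun hx hc => hc ⟨x, hx, rfl⟩
    rw [hz] at this
    simp at this
  have h2 : lam' (T '' A \ hatT A) = 0 := by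
    set B := A ∩ T ⁻¹' (hatT A)ᶜ with hB
    have hBm : MeasurableSet B := hA.inter (hT (hm A hA).compl)
    have hBnull : lam B = 0 := by
      by_contra h
      have := (hchar A hA _ (hm A hA).compl).mpr (pos_iff_ne_zero.mpr h)
      simp at this
    have hTB : lam' (T '' B) = 0 := hna B hBm hBnull
    refine measure_mono_null ?_ hTB
    rintro y ⟨⟨x, hx, rfl⟩, hy⟩
    exact ⟨x, ⟨hx, hy⟩, rfl⟩
  have := measure_union_le (μ := lam') (hatT A \ T '' A) (T '' A \ hatT A)
  rw [Set.symmDiff_def]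
  exact le_antisymm (by simpa [h1, h2] using this) zero_le'
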